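/- arXiv:1701.07741 — 2 statements merged into one kernel-verified Lean document; each statement's English description precedes it below -/
import Mathlib

section
/- Let F = F_1·F_2·⋯·F_m be a product with F_s ∈ {L_s^+, L_s^-, M_s^+, M_s^-} for each 1 ≤ s ≤ m. Then for all 1 ≤ a, b ≤ m with a ≠ b, one has V_{a,b}·F = (-1)^{1+‖F_a‖+‖F_b‖}·F. -/
noncomputable section

/-- The bilinear map `B((a,b),(c,d)) = ∑ⱼ aⱼ dⱼ` on `ℂ^m × ℂ^m`. -/
def splitBilin (m : ℕ) :
    ((Fin m → ℂ) × (Fin m → ℂ)) →ₗ[ℂ] ((Fin m → ℂ) × (Fin m → ℂ)) →ₗ[ℂ] ℂ :=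
  LinearMap.mk₂ ℂ (fun v w => ∑ j, v.1 j * w.2 j)
    (fun v v' w => by simp [add_mul, Finset.sum_add_distrib])
    (fun c v w => by
      simp only [LinearMap.smul_apply, Prod.smul_fst, Pi.smul_apply, smul_eq_mul,
        Finset.mul_sum]
      exact Finset.sum_congr rfl fun i _ => by ring)
    (fun v w w' => by simp [mul_add, Finset.sum_add_distrib])
    (fun c v w => by
      simp only [Prod.smul_snd, Pi.smul_apply, smul_eq_mul, Finset.mul_sum]
      exact Finset.sum_congr rfl fun i _ => by ring)

/-- The quadratic form `Q(a, b) = ∑ⱼ aⱼ bⱼ` on `ℂ^m × ℂ^m` (the span of the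
`f_j^+` and the `f_j^-`). -/
def splitQ (m : ℕ) : QuadraticForm ℂ ((Fin m → ℂ) × (Fin m → ℂ)) :=
  LinearMap.BilinMap.toQuadraticMap (splitBilin m)

/-- The forward basis element `e_j^+` (1-based index `j`). -/
def eP (m : ℕ) (j : ℕ) : CliffordAlgebra (splitQ m) :=
  CliffordAlgebra.ι (splitQ m) ((fun i => if (i : ℕ) + 1 = j then 1 else 0), 0)

/-- The backward basis element `e_j^-` (1-based index `j`). -/
def eM (m : ℕ) (j : ℕ) : CliffordAlgebra (splitQ m) :=
  CliffordAlgebra.ι (splitQ m) (0, (fun i => if (i : ℕ) + 1 = j then 1 else 0))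

/-- `e_j = e_j^+ + e_j^-`. -/
def ee (m : ℕ) (j : ℕ) : CliffordAlgebra (splitQ m) := eP m j + eM m j

/-- `e_j^⊥ = e_j^+ - e_j^-`. -/
def eperp (m : ℕ) (j : ℕ) : CliffordAlgebra (splitQ m) := eP m j - eM m j

/-- The constant `i` for odd (1-based) indices and `1` for even indices. -/
def oddI (s : ℕ) : ℂ := if s % 2 = 1 then Complex.I else 1

/-- `L_s^+`, i.e. `e_s^+ e_s^- + i e_s^+` for odd `s` and `e_s^+ e_s^- + e_s^+` for even `s`. -/
def idemLp (m : ℕ) (s : ℕ) : CliffordAlgebra (splitQ m) := eP m s * eM m s + oddI s • eP m s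

/-- `L_s^-`. -/
def idemLm (m : ℕ) (s : ℕ) : CliffordAlgebra (splitQ m) := eP m s * eM m s - oddI s • eP m s

/-- `M_s^+`, i.e. `e_s^- e_s^+ + i e_s^-` for odd `s` and `e_s^- e_s^+ + e_s^-` for even `s`. -/
def idemMp (m : ℕ) (s : ℕ) : CliffordAlgebra (splitQ m) := eM m s * eP m s + oddI s • eM m s

/-- `M_s^-`. -/
def idemMm (m : ℕ) (s : ℕ) : CliffordAlgebra (splitQ m) := eM m s * eP m s - oddI s • eM m s

/-- A generic choice `F_s ∈ {L_s^+, L_s^-, M_s^+, M_s^-}`, encoded by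
`‖F_s‖ : Bool` (`true` for the `M`'s) and `|F_s| : Bool`
(`true` for `L_s^-` and `M_s^+`). -/
def idemF (m : ℕ) (s : ℕ) : Bool → Bool → CliffordAlgebra (splitQ m)
  | false, false => idemLp m s
  | false, true => idemLm m s
  | true, false => idemMm m s
  | true, true => idemMp m s

/-- Numerical value of `|F_s|` or `‖F_s‖`. -/
def bval (b : Bool) : ℕ := if b then 1 else 0

/-- The four-vector `V_{a,b} = -e_a^⊥ e_a e_b^⊥ e_b`. -/
def VV (m : ℕ) (a b : ℕ) : CliffordAlgebra (splitQ m) :=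
  -(eperp m a * ee m a * eperp m b * ee m b)

/-- The ordered product `F = F_1 F_2 ⋯ F_m`, the factor `F_s` being encoded by
`(nrm s, sg s) = (‖F_s‖, |F_s|)`. -/
def prodF (m : ℕ) (nrm sg : ℕ → Bool) : CliffordAlgebra (splitQ m) :=
  ((List.range m).map fun s => idemF m (s + 1) (nrm (s + 1)) (sg (s + 1))).prod

-- auxiliary lemmas

lemma eP_sq (m j : ℕ) : eP m j * eP m j = 0 := by
  rw [eP, CliffordAlgebra.ι_sq_scalar]
  simp [splitQ, splitBilin, LinearMap.BilinMap.toQuadraticMap_apply, LinearMap.mk₂_apply]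
  exact RingHom.map_zero _

lemma eM_sq (m j : ℕ) : eM m j * eM m j = 0 := by
  rw [eM, CliffordAlgebra.ι_sq_scalar]
  simp [splitQ, splitBilin, LinearMap.BilinMap.toQuadraticMap_apply, LinearMap.mk₂_apply]
  exact RingHom.map_zero _

lemma eP_eM_swap (m j : ℕ) (h1 : 1 ≤ j) (hm : j ≤ m) :
    eP m j * eM m j + eM m j * eP m j = 1 := by
  rw [eP, eM, CliffordAlgebra.ι_mul_ι_add_swap]
  rw [splitQ, LinearMap.BilinMap.polar_toQuadraticMap]
  have : (∑ i : Fin m, (if (i : ℕ) + 1 = j then (if (i : ℕ) + 1 = j then (1:ℂ) else 0) else 0)) = 1 := by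
    rw [Finset.sum_eq_single ⟨j - 1, by omega⟩]
    · simp [Nat.sub_add_cancel h1]
    · intro i _ hi
      have : (i : ℕ) + 1 ≠ j := by
        intro hc; apply hi; ext; simp; omega
      simp [this]
    · simp
  have h2 : ((splitBilin m) ((fun i => if (i:ℕ) + 1 = j then (1:ℂ) else 0), 0))
        (0, fun i => if (i:ℕ) + 1 = j then (1:ℂ) else 0) +
      ((splitBilin m) (0, fun i => if (i:ℕ) + 1 = j then (1:ℂ) else 0))
        ((fun i => if (i:ℕ) + 1 = j then (1:ℂ) else 0), 0) = 1 := by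
    simp [splitBilin, this]
  rw [h2, map_one]

lemma eP_eP_anti (m j s : ℕ) : eP m j * eP m s = -(eP m s * eP m j) := by
  simp only [eP]
  rw [eq_neg_iff_add_eq_zero, CliffordAlgebra.ι_mul_ι_add_swap,
    splitQ, LinearMap.BilinMap.polar_toQuadraticMap]
  simp [splitBilin]
  exact RingHom.map_zero _

lemma eM_eM_anti (m j s : ℕ) : eM m j * eM m s = -(eM m s * eM m j) := by
  simp only [eM]
  rw [eq_neg_iff_add_eq_zero, CliffordAlgebra.ι_mul_ι_add_swap,
    splitQ, LinearMap.BilinMap.polar_toQuadraticMap]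
  simp [splitBilin]
  exact RingHom.map_zero _

lemma eP_eM_anti (m j s : ℕ) (h : j ≠ s) : eP m j * eM m s = -(eM m s * eP m j) := by
  simp only [eP, eM]
  rw [eq_neg_iff_add_eq_zero, CliffordAlgebra.ι_mul_ι_add_swap,
    splitQ, LinearMap.BilinMap.polar_toQuadraticMap]
  have : ∀ i : Fin m, (if (i:ℕ) + 1 = j then (1:ℂ) else 0) * (if (i:ℕ) + 1 = s then (1:ℂ) else 0) = 0 := by
    intro i
    rcases eq_or_ne ((i:ℕ)+1) j with h1 | h1
    · have : (i:ℕ) + 1 ≠ s := by omega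
      simp [this]
    · simp [h1]
  simp [splitBilin, this]
  exact RingHom.map_zero _

lemma eM_eP_anti (m j s : ℕ) (h : j ≠ s) : eM m j * eP m s = -(eP m s * eM m j) := by
  have := eP_eM_anti m s j h.symm
  rw [this, neg_neg]

/-- `D_j = e_j^⊥ e_j`. -/
def DD (m j : ℕ) : CliffordAlgebra (splitQ m) := eperp m j * ee m j

lemma pair_comm {A : Type*} [Ring A] {u v x : A} (hu : u * x = -(x * u))
    (hv : v * x = -(x * v)) : (u * v) * x = x * (u * v) := by
  calc (u * v) * x = u * (v * x) := mul_assoc u v x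
  _ = -((u * x) * v) := by rw [hv, mul_neg, mul_assoc]
  _ = x * u * v := by rw [hu, neg_mul, neg_neg]
  _ = x * (u * v) := mul_assoc x u v

lemma DD_comm_eP (m j s : ℕ) (h : s ≠ j) : Commute (DD m j) (eP m s) := by
  have hu : eperp m j * eP m s = -(eP m s * eperp m j) := by
    simp only [eperp, sub_mul, mul_sub, eP_eP_anti m j s, eM_eP_anti m j s h.symm]
    abel
  have hv : ee m j * eP m s = -(eP m s * ee m j) := by
    simp only [ee, add_mul, mul_add, eP_eP_anti m j s, eM_eP_anti m j s h.symm]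
    abel
  rw [Commute, SemiconjBy, DD]
  exact pair_comm hu hv

lemma DD_comm_eM (m j s : ℕ) (h : s ≠ j) : Commute (DD m j) (eM m s) := by
  have hu : eperp m j * eM m s = -(eM m s * eperp m j) := by
    simp only [eperp, sub_mul, mul_sub, eP_eM_anti m j s h.symm, eM_eM_anti m j s]
    abel
  have hv : ee m j * eM m s = -(eM m s * ee m j) := by
    simp only [ee, add_mul, mul_add, eP_eM_anti m j s h.symm, eM_eM_anti m j s]
    abel
  rw [Commute, SemiconjBy, DD]
  exact pair_comm hu hv

lemma DD_comm_idemF (m j s : ℕ) (h : s ≠ j) (n g : Bool) :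
    Commute (DD m j) (idemF m s n g) := by
  have hP := DD_comm_eP m j s h
  have hM := DD_comm_eM m j s h
  cases n <;> cases g <;>
    simp only [idemF, idemLp, idemLm, idemMp, idemMm] <;>
    first
      | exact ((hP.mul_right hM).add_right ((hP.smul_right _)))
      | exact ((hP.mul_right hM).sub_right ((hP.smul_right _)))
      | exact ((hM.mul_right hP).add_right ((hM.smul_right _)))
      | exact ((hM.mul_right hP).sub_right ((hM.smul_right _)))

section Abstract
variable {A : Type*} [Ring A] [Algebra ℂ A] {P M : A}

lemma keyL (hP : P * P = 0) (hM : M * M = 0) (h : P * M + M * P = 1) (c : ℂ) :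
    (P - M) * (P + M) * (P * M + c • P) = P * M + c • P := by
  have hMP : M * P = 1 - P * M := by rw [eq_sub_iff_add_eq, add_comm]; exact h
  have hPP' : ∀ x : A, P * (P * x) = 0 := fun x => by rw [← mul_assoc, hP, zero_mul]
  have hMM' : ∀ x : A, M * (M * x) = 0 := fun x => by rw [← mul_assoc, hM, zero_mul]
  have hMP' : ∀ x : A, M * (P * x) = x - P * (M * x) := fun x => by
    rw [← mul_assoc, hMP, sub_mul, one_mul, mul_assoc]
  simp only [sub_mul, add_mul, mul_add, mul_sub, smul_mul_assoc, mul_smul_comm,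
    mul_assoc, hPP', hMM', hMP', hMP, hP, hM, one_mul, mul_one, mul_zero, zero_mul,
    smul_zero, smul_sub, smul_add, sub_zero, add_zero, zero_add]
  abel

lemma keyM (hP : P * P = 0) (hM : M * M = 0) (h : P * M + M * P = 1) (c : ℂ) :
    (P - M) * (P + M) * (M * P + c • M) = -(M * P + c • M) := by
  have hMP : M * P = 1 - P * M := by rw [eq_sub_iff_add_eq, add_comm]; exact h
  have hPP' : ∀ x : A, P * (P * x) = 0 := fun x => by rw [← mul_assoc, hP, zero_mul]
  have hMM' : ∀ x : A, M * (M * x) = 0 := fun x => by rw [← mul_assoc, hM, zero_mul]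
  have hMP' : ∀ x : A, M * (P * x) = x - P * (M * x) := fun x => by
    rw [← mul_assoc, hMP, sub_mul, one_mul, mul_assoc]
  simp only [sub_mul, add_mul, mul_add, mul_sub, smul_mul_assoc, mul_smul_comm,
    mul_assoc, hPP', hMM', hMP', hMP, hP, hM, one_mul, mul_one, mul_zero, zero_mul,
    smul_zero, smul_sub, smul_add, sub_zero, add_zero, zero_add, neg_add, neg_sub]
  abel

end Abstract

lemma DD_mul_idemF (m s : ℕ) (h1 : 1 ≤ s) (hs : s ≤ m) (n g : Bool) :
    DD m s * idemF m s n g = ((-1 : ℂ) ^ bval n) • idemF m s n g := by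
  have hP := eP_sq m s
  have hM := eM_sq m s
  have h := eP_eM_swap m s h1 hs
  have hD : DD m s = (eP m s - eM m s) * (eP m s + eM m s) := rfl
  have hb0 : ((-1 : ℂ) ^ bval false) = 1 := by simp [bval]
  have hb1 : ((-1 : ℂ) ^ bval true) = -1 := by simp [bval]
  cases n <;> cases g
  · rw [show idemF m s false false = idemLp m s from rfl, hb0, one_smul, idemLp, hD]
    exact keyL hP hM h _
  · have k := keyL hP hM h (-(oddI s))
    rw [neg_smul, ← sub_eq_add_neg] at k
    rw [show idemF m s false true = idemLm m s from rfl, hb0, one_smul, idemLm, hD]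
    exact k
  · have k := keyM hP hM h (-(oddI s))
    rw [neg_smul, ← sub_eq_add_neg] at k
    rw [show idemF m s true false = idemMm m s from rfl, hb1, idemMm, hD, neg_one_smul]
    exact k
  · rw [show idemF m s true true = idemMp m s from rfl, hb1, idemMp, hD, neg_one_smul]
    exact keyM hP hM h _

/-- Partial product `F_1 ⋯ F_k`. -/
def Pk (m : ℕ) (nrm sg : ℕ → Bool) (k : ℕ) : CliffordAlgebra (splitQ m) :=
  ((List.range k).map fun s => idemF m (s + 1) (nrm (s + 1)) (sg (s + 1))).prod

lemma Pk_succ (m : ℕ) (nrm sg : ℕ → Bool) (k : ℕ) :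
    Pk m nrm sg (k + 1) = Pk m nrm sg k * idemF m (k + 1) (nrm (k + 1)) (sg (k + 1)) := by
  rw [Pk, Pk, List.range_succ, List.map_append, List.prod_append]
  simp

lemma DD_comm_Pk (m : ℕ) (nrm sg : ℕ → Bool) (j k : ℕ) (h : k < j) :
    Commute (DD m j) (Pk m nrm sg k) := by
  induction k with
  | zero => simpa [Pk] using Commute.one_right _
  | succ k ih =>
    rw [Pk_succ]
    exact (ih (by omega)).mul_right (DD_comm_idemF m j (k + 1) (by omega) _ _)

lemma DD_mul_Pk (m : ℕ) (nrm sg : ℕ → Bool) (j k : ℕ) (h1 : 1 ≤ j) (hjk : j ≤ k)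
    (hkm : k ≤ m) :
    DD m j * Pk m nrm sg k = ((-1 : ℂ) ^ bval (nrm j)) • Pk m nrm sg k := by
  induction k with
  | zero => omega
  | succ k ih =>
    rw [Pk_succ]
    rcases eq_or_lt_of_le hjk with hjk' | hjk'
    · have hc := (DD_comm_Pk m nrm sg j k (by omega)).eq
      rw [← mul_assoc, hc, mul_assoc, hjk',
        DD_mul_idemF m (k + 1) (by omega) (by omega), mul_smul_comm]
    · rw [← mul_assoc, ih (by omega) (by omega), smul_mul_assoc]

/-- for `F = F_1 F_2 ⋯ F_m` and `a ≠ b`,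
`V_{a,b} F = (-1)^{1+‖F_a‖+‖F_b‖} F`. -/
theorem V_mul_prodF (m : ℕ) (hm : 1 ≤ m) (nrm sg : ℕ → Bool) (a b : ℕ)
    (ha1 : 1 ≤ a) (ham : a ≤ m) (hb1 : 1 ≤ b) (hbm : b ≤ m) (hab : a ≠ b) :
    VV m a b * prodF m nrm sg =
      ((-1 : ℂ) ^ (1 + bval (nrm a) + bval (nrm b))) • prodF m nrm sg := by
  have hV : VV m a b = -(DD m a * DD m b) := by
    simp [VV, DD, mul_assoc]
  have hF : prodF m nrm sg = Pk m nrm sg m := rfl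
  rw [hV, hF, neg_mul, mul_assoc, DD_mul_Pk m nrm sg b m hb1 hbm le_rfl,
    mul_smul_comm, DD_mul_Pk m nrm sg a m ha1 ham le_rfl, smul_smul, ← neg_smul]
  congr 1
  rw [pow_add, pow_add, pow_one]
  ring

end
end

section
/- Let m = 2n with n ≥ 2, let F = F_1·F_2·⋯·F_m with F_s ∈ {L_s^+, L_s^-, M_s^+, M_s^-} for each 1 ≤ s ≤ m, and let 1 ≤ a < b ≤ n. Then V_{2a-1,2b}·F·e_{2a-1}^⊥·e_{2b}^⊥ = (-1)^{|F_{2a-1}|+|F_{2b}|+‖F_{2a-1}‖+‖F_{2b}‖}·i·F^{2a,2b-1} and V_{2a,2b-1}·F·e_{2a}^⊥·e_{2b-1}^⊥ = (-1)^{|F_{2a}|+|F_{2b-1}|+‖F_{2a}‖+‖F_{2b-1}‖}·i·F^{2a,2b-1}. -/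
noncomputable section

set_option linter.unusedSectionVars false

lemma splitQ_apply (m : ℕ) (x) : splitQ m x = ∑ j, x.1 j * x.2 j := rfl

lemma splitQ_polar (m : ℕ) (x y) : QuadraticMap.polar (splitQ m) x y
    = (∑ j, x.1 j * y.2 j) + ∑ j, y.1 j * x.2 j := by
  simp only [QuadraticMap.polar, splitQ_apply, Prod.fst_add, Prod.snd_add, Pi.add_apply,
    mul_add, add_mul, Finset.sum_add_distrib]
  ring

lemma eP_mul_eP (m j l : ℕ) : eP m j * eP m l = -(eP m l * eP m j) := by
  have h := CliffordAlgebra.ι_mul_ι_add_swap (Q := splitQ m)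
    ((fun i => if (i : ℕ) + 1 = j then 1 else 0), 0)
    ((fun i => if (i : ℕ) + 1 = l then 1 else 0), 0)
  rw [splitQ_polar] at h
  simp only [Pi.zero_apply, mul_zero, zero_mul, Finset.sum_const_zero, add_zero, map_zero] at h
  rw [eP, eP]
  exact eq_neg_of_add_eq_zero_left h

lemma eM_mul_eM (m j l : ℕ) : eM m j * eM m l = -(eM m l * eM m j) := by
  have h := CliffordAlgebra.ι_mul_ι_add_swap (Q := splitQ m)
    (0, (fun i => if (i : ℕ) + 1 = j then 1 else 0))
    (0, (fun i => if (i : ℕ) + 1 = l then 1 else 0))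
  rw [splitQ_polar] at h
  simp only [Pi.zero_apply, mul_zero, zero_mul, Finset.sum_const_zero, add_zero, map_zero] at h
  rw [eM, eM]
  exact eq_neg_of_add_eq_zero_left h

lemma eP_mul_eM_ne (m j l : ℕ) (h : j ≠ l) : eP m j * eM m l = -(eM m l * eP m j) := by
  have h2 := CliffordAlgebra.ι_mul_ι_add_swap (Q := splitQ m)
    ((fun i => if (i : ℕ) + 1 = j then 1 else 0), 0)
    (0, (fun i => if (i : ℕ) + 1 = l then 1 else 0))
  rw [splitQ_polar] at h2
  simp only [Pi.zero_apply, zero_mul, mul_zero, Finset.sum_const_zero, add_zero, zero_add] at h2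
  have hz : (∑ i : Fin m, (if (i : ℕ) + 1 = j then (1:ℂ) else 0) * (if (i : ℕ) + 1 = l then 1 else 0)) = 0 := by
    apply Finset.sum_eq_zero
    intro i _
    by_cases hij : (i : ℕ) + 1 = j
    · simp [hij, h]
    · simp [hij]
  rw [hz, map_zero] at h2
  rw [eP, eM]
  exact eq_neg_of_add_eq_zero_left h2

lemma eM_mul_eP_ne (m j l : ℕ) (h : j ≠ l) : eM m j * eP m l = -(eP m l * eM m j) := by
  have := eP_mul_eM_ne m l j (Ne.symm h)
  linear_combination (norm := noncomm_ring) this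

lemma eP_mul_eM_self (m j : ℕ) (h1 : 1 ≤ j) (h2 : j ≤ m) :
    eP m j * eM m j + eM m j * eP m j = 1 := by
  have h3 := CliffordAlgebra.ι_mul_ι_add_swap (Q := splitQ m)
    ((fun i => if (i : ℕ) + 1 = j then 1 else 0), 0)
    (0, (fun i => if (i : ℕ) + 1 = j then 1 else 0))
  rw [splitQ_polar] at h3
  simp only [Pi.zero_apply, zero_mul, mul_zero, Finset.sum_const_zero, add_zero, zero_add] at h3
  have hz : (∑ i : Fin m, (if (i : ℕ) + 1 = j then (1:ℂ) else 0) * (if (i : ℕ) + 1 = j then 1 else 0)) = 1 := by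
    rw [Finset.sum_eq_single (⟨j - 1, by omega⟩ : Fin m)]
    · simp [(by omega : j - 1 + 1 = j)]
    · intro i _ hi
      have hne : (i : ℕ) + 1 ≠ j := by
        intro hc
        apply hi
        apply Fin.ext
        simp
        omega
      simp [hne]
    · simp
  rw [hz, map_one] at h3
  rw [eP, eM]
  exact h3

section OneIndex
variable {A : Type*} [Ring A] [Algebra ℂ A] {p q : A}

lemma hqp1 (hpq : p * q + q * p = 1) : q * p = 1 - p * q := by
  linear_combination (norm := noncomm_ring) hpq
lemma hppx (hpp : p * p = 0) (x : A) : p * (p * x) = 0 := by rw [← mul_assoc, hpp, zero_mul]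
lemma hqqx (hqq : q * q = 0) (x : A) : q * (q * x) = 0 := by rw [← mul_assoc, hqq, zero_mul]
lemma hqpx (hpq : p * q + q * p = 1) (x : A) : q * (p * x) = x - p * (q * x) := by
  rw [← mul_assoc, hqp1 hpq, sub_mul, one_mul, mul_assoc]

lemma swapF_v {u : A} (hx : p * u = -(u * p)) (hy : q * u = -(u * q)) (c : ℂ) :
    (p * q + c • p) * u = u * (p * q + (-c) • p) := by
  have h1 : p * q * u = u * (p * q) := by
    rw [mul_assoc, hy, mul_neg, ← mul_assoc, hx, neg_mul, neg_neg, mul_assoc]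
  rw [add_mul, h1, smul_mul_assoc, hx, mul_add, neg_smul, smul_neg, mul_neg, mul_smul_comm]

lemma swapG_x {u v : A} (hx : p * u = -(u * p)) (hy : p * v = -(v * p)) :
    u * v * p = p * (u * v) := by
  have hy' : v * p = -(p * v) := by linear_combination (norm := noncomm_ring) hy
  have hx' : u * p = -(p * u) := by linear_combination (norm := noncomm_ring) hx
  rw [mul_assoc, hy', mul_neg, ← mul_assoc, hx', neg_mul, neg_neg, mul_assoc]


variable (hpp : p * p = 0) (hqq : q * q = 0) (hpq : p * q + q * p = 1)
include hpp hqq hpq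

lemma keyG_L (c : ℂ) : (p - q) * (p + q) * (p * q + c • p) = p * q + c • p := by
  simp only [sub_mul, add_mul, mul_add, mul_sub, smul_mul_assoc, mul_smul_comm, mul_assoc,
    hpp, hqq, hppx hpp, hqqx hqq, hqpx hpq, hqp1 hpq, mul_zero, zero_mul, mul_one, one_mul,
    smul_zero, sub_zero, zero_sub, zero_add, add_zero, smul_sub, smul_add, neg_add_rev, neg_sub]
  match_scalars <;> ring1

lemma keyG_M (c : ℂ) : (p - q) * (p + q) * (q * p + c • q) = -(q * p + c • q) := by
  simp only [sub_mul, add_mul, mul_add, mul_sub, smul_mul_assoc, mul_smul_comm, mul_assoc,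
    hpp, hqq, hppx hpp, hqqx hqq, hqpx hpq, hqp1 hpq, mul_zero, zero_mul, mul_one, one_mul,
    smul_zero, sub_zero, zero_sub, zero_add, add_zero, smul_sub, smul_add, neg_add_rev, neg_sub]
  match_scalars <;> ring1

lemma keyL_v (c : ℂ) (hc : c * c = -1) :
    (p * q + c • p) * (p - q) = (-c) • (p * q + c • p) := by
  simp only [sub_mul, add_mul, mul_add, mul_sub, smul_mul_assoc, mul_smul_comm, mul_assoc,
    hpp, hqq, hppx hpp, hqqx hqq, hqpx hpq, hqp1 hpq, mul_zero, zero_mul, mul_one, one_mul,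
    smul_zero, sub_zero, zero_sub, zero_add, add_zero, smul_sub, smul_add, smul_smul,
    neg_add_rev, neg_sub]
  match_scalars <;> first | ring1 | linear_combination hc | linear_combination -hc |
    linear_combination c*hc | linear_combination -c*hc

lemma keyM_v (c : ℂ) (hc : c * c = -1) :
    (q * p + c • q) * (p - q) = c • (q * p + c • q) := by
  simp only [sub_mul, add_mul, mul_add, mul_sub, smul_mul_assoc, mul_smul_comm, mul_assoc,
    hpp, hqq, hppx hpp, hqqx hqq, hqpx hpq, hqp1 hpq, mul_zero, zero_mul, mul_one, one_mul,
    smul_zero, sub_zero, zero_sub, zero_add, add_zero, smul_sub, smul_add, smul_smul,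
    neg_add_rev, neg_sub]
  match_scalars <;> first | ring1 | linear_combination hc | linear_combination -hc |
    linear_combination c*hc | linear_combination -c*hc

lemma keyL_v1 (c : ℂ) (hc : c * c = 1) :
    (p * q + c • p) * (p - q) = (-c) • (p * q + (-c) • p) := by
  simp only [sub_mul, add_mul, mul_add, mul_sub, smul_mul_assoc, mul_smul_comm, mul_assoc,
    hpp, hqq, hppx hpp, hqqx hqq, hqpx hpq, hqp1 hpq, mul_zero, zero_mul, mul_one, one_mul,
    smul_zero, sub_zero, zero_sub, zero_add, add_zero, smul_sub, smul_add, smul_smul,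
    neg_add_rev, neg_sub]
  match_scalars <;> first | ring1 | linear_combination hc | linear_combination -hc |
    linear_combination c*hc | linear_combination -c*hc

lemma keyM_v1 (c : ℂ) (hc : c * c = 1) :
    (q * p + c • q) * (p - q) = c • (q * p + (-c) • q) := by
  simp only [sub_mul, add_mul, mul_add, mul_sub, smul_mul_assoc, mul_smul_comm, mul_assoc,
    hpp, hqq, hppx hpp, hqqx hqq, hqpx hpq, hqp1 hpq, mul_zero, zero_mul, mul_one, one_mul,
    smul_zero, sub_zero, zero_sub, zero_add, add_zero, smul_sub, smul_add, smul_smul,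
    neg_add_rev, neg_sub]
  match_scalars <;> first | ring1 | linear_combination hc | linear_combination -hc |
    linear_combination c*hc | linear_combination -c*hc

end OneIndex

section CliffordInst
variable (m : ℕ)

lemma eP_mul_eperp (s t : ℕ) (hst : s ≠ t) :
    eP m s * eperp m t = -(eperp m t * eP m s) := by
  rw [eperp]
  linear_combination (norm := noncomm_ring) (eP_mul_eP m s t) - (eP_mul_eM_ne m s t hst)

lemma eM_mul_eperp (s t : ℕ) (hst : s ≠ t) :
    eM m s * eperp m t = -(eperp m t * eM m s) := by
  rw [eperp]
  linear_combination (norm := noncomm_ring) (eM_mul_eP_ne m s t hst) - (eM_mul_eM m s t)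

lemma eP_mul_ee (s t : ℕ) (hst : s ≠ t) :
    eP m s * ee m t = -(ee m t * eP m s) := by
  rw [ee]
  linear_combination (norm := noncomm_ring) (eP_mul_eP m s t) + (eP_mul_eM_ne m s t hst)

lemma eM_mul_ee (s t : ℕ) (hst : s ≠ t) :
    eM m s * ee m t = -(ee m t * eM m s) := by
  rw [ee]
  linear_combination (norm := noncomm_ring) (eM_mul_eP_ne m s t hst) + (eM_mul_eM m s t)

lemma oddI_odd (s : ℕ) (h : s % 2 = 1) : oddI s = Complex.I := by rw [oddI, if_pos h]
lemma oddI_even (s : ℕ) (h : s % 2 = 0) : oddI s = 1 := by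
  rw [oddI, if_neg (by omega)]

lemma eLp (s : ℕ) : idemLp m s = eP m s * eM m s + oddI s • eP m s := rfl
lemma eLm (s : ℕ) : idemLm m s = eP m s * eM m s + (-(oddI s)) • eP m s := by
  rw [idemLm, neg_smul, ← sub_eq_add_neg]
lemma eMp (s : ℕ) : idemMp m s = eM m s * eP m s + oddI s • eM m s := rfl
lemma eMm (s : ℕ) : idemMm m s = eM m s * eP m s + (-(oddI s)) • eM m s := by
  rw [idemMm, neg_smul, ← sub_eq_add_neg]

/-- `G_s F_s = ±F_s`. -/
lemma G_mul_F (s : ℕ) (h1 : 1 ≤ s) (h2 : s ≤ m) (ns gs : Bool) :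
    (eperp m s * ee m s) * idemF m s ns gs =
      (if ns then (-1 : ℂ) else 1) • idemF m s ns gs := by
  have hpp := eP_sq m s
  have hqq := eM_sq m s
  have hpq := eP_mul_eM_self m s h1 h2
  rw [eperp, ee]
  cases ns <;> cases gs
  · show _ * idemLp m s = (1 : ℂ) • idemLp m s
    rw [one_smul, eLp]
    exact keyG_L hpp hqq hpq (oddI s)
  · show _ * idemLm m s = (1 : ℂ) • idemLm m s
    rw [one_smul, eLm]
    exact keyG_L hpp hqq hpq (-(oddI s))
  · show _ * idemMm m s = (-1 : ℂ) • idemMm m s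
    rw [neg_one_smul, eMm]
    exact keyG_M hpp hqq hpq (-(oddI s))
  · show _ * idemMp m s = (-1 : ℂ) • idemMp m s
    rw [neg_one_smul, eMp]
    exact keyG_M hpp hqq hpq (oddI s)

/-- odd index: `F_s e_s^⊥ = ±i F_s`. -/
lemma F_mul_eperp_odd (s : ℕ) (h1 : 1 ≤ s) (h2 : s ≤ m) (hodd : s % 2 = 1) (ns gs : Bool) :
    idemF m s ns gs * eperp m s =
      (if gs then Complex.I else -Complex.I) • idemF m s ns gs := by
  have hpp := eP_sq m s
  have hqq := eM_sq m s
  have hpq := eP_mul_eM_self m s h1 h2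
  have hI : Complex.I * Complex.I = -1 := Complex.I_mul_I
  have hI' : (-Complex.I) * (-Complex.I) = -1 := by rw [neg_mul_neg, Complex.I_mul_I]
  have hc : oddI s = Complex.I := oddI_odd s hodd
  rw [eperp]
  cases ns <;> cases gs
  · show idemLp m s * _ = (-Complex.I) • idemLp m s
    rw [eLp, hc]
    exact keyL_v hpp hqq hpq Complex.I hI
  · show idemLm m s * _ = Complex.I • idemLm m s
    rw [eLm, hc]
    have := keyL_v hpp hqq hpq (-Complex.I) hI'
    rwa [neg_neg] at this
  · show idemMm m s * _ = (-Complex.I) • idemMm m s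
    rw [eMm, hc]
    exact keyM_v hpp hqq hpq (-Complex.I) hI'
  · show idemMp m s * _ = Complex.I • idemMp m s
    rw [eMp, hc]
    exact keyM_v hpp hqq hpq Complex.I hI

/-- even index: `F_s e_s^⊥ = ±(tilde F_s)`. -/
lemma F_mul_eperp_even (s : ℕ) (h1 : 1 ≤ s) (h2 : s ≤ m) (heven : s % 2 = 0) (ns gs : Bool) :
    idemF m s ns gs * eperp m s =
      (if gs then (1 : ℂ) else -1) • idemF m s ns (!gs) := by
  have hpp := eP_sq m s
  have hqq := eM_sq m s
  have hpq := eP_mul_eM_self m s h1 h2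
  have h1' : (1 : ℂ) * 1 = 1 := by norm_num
  have h1'' : (-1 : ℂ) * -1 = 1 := by norm_num
  have hc : oddI s = 1 := oddI_even s heven
  rw [eperp]
  cases ns <;> cases gs
  · show idemLp m s * _ = (-1 : ℂ) • idemLm m s
    rw [eLp, eLm, hc]
    exact keyL_v1 hpp hqq hpq 1 h1'
  · show idemLm m s * _ = (1 : ℂ) • idemLp m s
    rw [eLm, eLp, hc]
    have := keyL_v1 hpp hqq hpq (-1) h1''
    simpa using this
  · show idemMm m s * _ = (-1 : ℂ) • idemMp m s
    rw [eMm, eMp, hc]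
    have := keyM_v1 hpp hqq hpq (-1) h1''
    simpa using this
  · show idemMp m s * _ = (1 : ℂ) • idemMm m s
    rw [eMp, eMm, hc]
    exact keyM_v1 hpp hqq hpq 1 h1'

/-- other index: `F_s e_t^⊥ = e_t^⊥ (tilde F_s)`. -/
lemma F_mul_eperp_other (s t : ℕ) (hst : s ≠ t) (ns gs : Bool) :
    idemF m s ns gs * eperp m t = eperp m t * idemF m s ns (!gs) := by
  have hx := eP_mul_eperp m s t hst
  have hy := eM_mul_eperp m s t hst
  cases ns <;> cases gs
  · show idemLp m s * _ = _ * idemLm m s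
    rw [eLp, eLm]
    exact swapF_v hx hy (oddI s)
  · show idemLm m s * _ = _ * idemLp m s
    rw [eLm, eLp]
    have := swapF_v hx hy (-(oddI s))
    rwa [neg_neg] at this
  · show idemMm m s * _ = _ * idemMp m s
    rw [eMm, eMp]
    have := swapF_v hy hx (-(oddI s))
    rwa [neg_neg] at this
  · show idemMp m s * _ = _ * idemMm m s
    rw [eMp, eMm]
    exact swapF_v hy hx (oddI s)

/-- `G_t` commutes with `F_s` for `s ≠ t`. -/
lemma G_comm_F (s t : ℕ) (hst : s ≠ t) (ns gs : Bool) :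
    (eperp m t * ee m t) * idemF m s ns gs = idemF m s ns gs * (eperp m t * ee m t) := by
  have c1 : Commute (eperp m t * ee m t) (eP m s) :=
    swapG_x (eP_mul_eperp m s t hst) (eP_mul_ee m s t hst)
  have c2 : Commute (eperp m t * ee m t) (eM m s) :=
    swapG_x (eM_mul_eperp m s t hst) (eM_mul_ee m s t hst)
  have key : ∀ (x y : CliffordAlgebra (splitQ m)) (c : ℂ),
      Commute (eperp m t * ee m t) x → Commute (eperp m t * ee m t) y →
      (eperp m t * ee m t) * (x * y + c • x) = (x * y + c • x) * (eperp m t * ee m t) := by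
    intro x y c cx cy
    exact ((cx.mul_right cy).add_right (cx.smul_right c))
  cases ns <;> cases gs
  · exact key _ _ _ c1 c2
  · show _ * idemLm m s = idemLm m s * _
    rw [eLm]
    exact key _ _ _ c1 c2
  · show _ * idemMm m s = idemMm m s * _
    rw [eMm]
    exact key _ _ _ c2 c1
  · exact key _ _ _ c2 c1

end CliffordInst

section ListMachinery

/-- Product of the `F_s` over a list of (1-based) indices. -/
def Pl (m : ℕ) (nrm sg : ℕ → Bool) (l : List ℕ) : CliffordAlgebra (splitQ m) :=
  (l.map fun s => idemF m s (nrm s) (sg s)).prod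

variable (m : ℕ) (nrm : ℕ → Bool)

lemma Pl_nil (sg : ℕ → Bool) : Pl m nrm sg [] = 1 := rfl

lemma Pl_cons (sg : ℕ → Bool) (a : ℕ) (l : List ℕ) :
    Pl m nrm sg (a :: l) = idemF m a (nrm a) (sg a) * Pl m nrm sg l := by
  simp [Pl]

lemma Pl_singleton (sg : ℕ → Bool) (a : ℕ) :
    Pl m nrm sg [a] = idemF m a (nrm a) (sg a) := by
  simp [Pl]

lemma Pl_append (sg : ℕ → Bool) (l₁ l₂ : List ℕ) :
    Pl m nrm sg (l₁ ++ l₂) = Pl m nrm sg l₁ * Pl m nrm sg l₂ := by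
  simp [Pl]

lemma Pl_congr (sg₁ sg₂ : ℕ → Bool) (l : List ℕ) (h : ∀ s ∈ l, sg₁ s = sg₂ s) :
    Pl m nrm sg₁ l = Pl m nrm sg₂ l := by
  induction l with
  | nil => rfl
  | cons a l ih =>
      rw [Pl_cons, Pl_cons, h a List.mem_cons_self,
        ih (fun s hs => h s (List.mem_cons_of_mem a hs))]

lemma Pl_mul_eperp (sg : ℕ → Bool) (t : ℕ) (l : List ℕ) (h : ∀ s ∈ l, s ≠ t) :
    Pl m nrm sg l * eperp m t = eperp m t * Pl m nrm (fun s => !sg s) l := by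
  induction l with
  | nil => rw [Pl_nil, Pl_nil, one_mul, mul_one]
  | cons a l ih =>
      rw [Pl_cons, Pl_cons, mul_assoc, ih (fun s hs => h s (List.mem_cons_of_mem a hs)),
        ← mul_assoc, F_mul_eperp_other m a t (h a List.mem_cons_self), mul_assoc]

lemma G_comm_Pl (sg : ℕ → Bool) (t : ℕ) (l : List ℕ) (h : ∀ s ∈ l, s ≠ t) :
    (eperp m t * ee m t) * Pl m nrm sg l = Pl m nrm sg l * (eperp m t * ee m t) := by
  induction l with
  | nil => rw [Pl_nil, one_mul, mul_one]
  | cons a l ih =>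
      rw [Pl_cons, ← mul_assoc, G_comm_F m a t (h a List.mem_cons_self), mul_assoc,
        ih (fun s hs => h s (List.mem_cons_of_mem a hs)), mul_assoc]

/-- the list `[lo+1, …, lo+len]`. -/
def seg (lo len : ℕ) : List ℕ := (List.range len).map fun i => lo + 1 + i

lemma seg_append (lo x y : ℕ) : seg lo (x + y) = seg lo x ++ seg (lo + x) y := by
  rw [seg, List.range_add, List.map_append, List.map_map, seg, seg]
  congr 1
  apply List.map_congr_left
  intro i _
  simp only [Function.comp_apply]
  omega

lemma seg_one (lo : ℕ) : seg lo 1 = [lo + 1] := rfl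

lemma mem_seg {lo len s : ℕ} : s ∈ seg lo len ↔ lo + 1 ≤ s ∧ s ≤ lo + len := by
  simp only [seg, List.mem_map, List.mem_range]
  constructor
  · rintro ⟨i, hi, rfl⟩; omega
  · intro h; exact ⟨s - lo - 1, by omega, by omega⟩

lemma prodF_eq (sg : ℕ → Bool) : prodF m nrm sg = Pl m nrm sg (seg 0 m) := by
  rw [prodF, Pl, seg, List.map_map]
  congr 1
  apply List.map_congr_left
  intro i _
  simp only [Function.comp_apply]
  rw [(by omega : 0 + 1 + i = i + 1)]

lemma seg_split3 (x : ℕ) (hx1 : 1 ≤ x) (hxm : x ≤ m) :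
    seg 0 m = seg 0 (x - 1) ++ ([x] ++ seg x (m - x)) := by
  have h1 : m = (x - 1) + (1 + (m - x)) := by omega
  calc seg 0 m = seg 0 ((x - 1) + (1 + (m - x))) := by rw [← h1]
    _ = seg 0 (x - 1) ++ seg (0 + (x - 1)) (1 + (m - x)) := seg_append 0 _ _
    _ = seg 0 (x - 1) ++ (seg (x - 1) 1 ++ seg ((x - 1) + 1) (m - x)) := by
        rw [Nat.zero_add, seg_append]
    _ = seg 0 (x - 1) ++ ([x] ++ seg x (m - x)) := by
        rw [seg_one, (by omega : x - 1 + 1 = x)]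

/-- `G_x · F = ±F`. -/
lemma G_mul_Pl_seg (sg : ℕ → Bool) (x : ℕ) (hx1 : 1 ≤ x) (hxm : x ≤ m) :
    (eperp m x * ee m x) * Pl m nrm sg (seg 0 m) =
      (if nrm x then (-1 : ℂ) else 1) • Pl m nrm sg (seg 0 m) := by
  rw [seg_split3 m x hx1 hxm, Pl_append, Pl_append, Pl_singleton]
  have hA : ∀ s ∈ seg 0 (x - 1), s ≠ x := by
    intro s hs; rw [mem_seg] at hs; omega
  rw [← mul_assoc, G_comm_Pl m nrm sg x _ hA, mul_assoc, ← mul_assoc _ (idemF m x _ _),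
    G_mul_F m x hx1 hxm, smul_mul_assoc, mul_smul_comm]

/-- odd `x` : `F · e_x^⊥ = (±i) F'` with the tail flipped. -/
lemma Pl_mul_eperp_odd (sg : ℕ → Bool) (x : ℕ) (hx1 : 1 ≤ x) (hxm : x ≤ m)
    (hodd : x % 2 = 1) :
    Pl m nrm sg (seg 0 m) * eperp m x =
      (if sg x then Complex.I else -Complex.I) •
        Pl m nrm (fun s => if x < s then !sg s else sg s) (seg 0 m) := by
  rw [seg_split3 m x hx1 hxm, Pl_append, Pl_append, Pl_singleton]
  have hC : ∀ s ∈ seg x (m - x), s ≠ x := by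
    intro s hs; rw [mem_seg] at hs; omega
  rw [mul_assoc, mul_assoc, Pl_mul_eperp m nrm sg x _ hC, ← mul_assoc (idemF m x _ _),
    F_mul_eperp_odd m x hx1 hxm hodd, smul_mul_assoc, mul_smul_comm]
  have e1 : Pl m nrm sg (seg 0 (x - 1)) =
      Pl m nrm (fun s => if x < s then !sg s else sg s) (seg 0 (x - 1)) := by
    apply Pl_congr
    intro s hs; rw [mem_seg] at hs
    rw [if_neg (by omega : ¬ x < s)]
  have e2 : Pl m nrm (fun s => !sg s) (seg x (m - x)) =
      Pl m nrm (fun s => if x < s then !sg s else sg s) (seg x (m - x)) := by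
    apply Pl_congr
    intro s hs; rw [mem_seg] at hs
    rw [if_pos (by omega : x < s)]
  have e3 : Pl m nrm sg [x] =
      Pl m nrm (fun s => if x < s then !sg s else sg s) [x] := by
    apply Pl_congr
    intro s hs
    simp only [List.mem_singleton] at hs
    subst hs
    rw [if_neg (lt_irrefl s)]
  congr 1
  conv_rhs => rw [Pl_append, Pl_append, ← e1, ← e3, ← e2, Pl_singleton]

/-- even `x` : `F · e_x^⊥ = (±1) F'` with position `x` and the tail flipped. -/
lemma Pl_mul_eperp_even (sg : ℕ → Bool) (x : ℕ) (hx1 : 1 ≤ x) (hxm : x ≤ m)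
    (heven : x % 2 = 0) :
    Pl m nrm sg (seg 0 m) * eperp m x =
      (if sg x then (1 : ℂ) else -1) •
        Pl m nrm (fun s => if x ≤ s then !sg s else sg s) (seg 0 m) := by
  rw [seg_split3 m x hx1 hxm, Pl_append, Pl_append, Pl_singleton]
  have hC : ∀ s ∈ seg x (m - x), s ≠ x := by
    intro s hs; rw [mem_seg] at hs; omega
  rw [mul_assoc, mul_assoc, Pl_mul_eperp m nrm sg x _ hC, ← mul_assoc (idemF m x _ _),
    F_mul_eperp_even m x hx1 hxm heven, smul_mul_assoc, mul_smul_comm]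
  have e1 : Pl m nrm sg (seg 0 (x - 1)) =
      Pl m nrm (fun s => if x ≤ s then !sg s else sg s) (seg 0 (x - 1)) := by
    apply Pl_congr
    intro s hs; rw [mem_seg] at hs
    rw [if_neg (by omega : ¬ x ≤ s)]
  have e2 : Pl m nrm (fun s => !sg s) (seg x (m - x)) =
      Pl m nrm (fun s => if x ≤ s then !sg s else sg s) (seg x (m - x)) := by
    apply Pl_congr
    intro s hs; rw [mem_seg] at hs
    rw [if_pos (by omega : x ≤ s)]
  have e3 : Pl m nrm (fun s => !sg s) [x] =
      Pl m nrm (fun s => if x ≤ s then !sg s else sg s) [x] := by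
    apply Pl_congr
    intro s hs
    simp only [List.mem_singleton] at hs
    subst hs
    rw [if_pos (le_refl s)]
  congr 1
  conv_rhs => rw [Pl_append, Pl_append, ← e1, ← e3, ← e2, Pl_singleton]

/-- `V_{x,y} F = ±F`. -/
lemma VV_mul_Pl (sg : ℕ → Bool) (x y : ℕ) (hx1 : 1 ≤ x) (hxm : x ≤ m)
    (hy1 : 1 ≤ y) (hym : y ≤ m) :
    VV m x y * Pl m nrm sg (seg 0 m) =
      (-((if nrm x then (-1 : ℂ) else 1) * (if nrm y then (-1 : ℂ) else 1))) •
        Pl m nrm sg (seg 0 m) := by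
  have h0 : VV m x y * Pl m nrm sg (seg 0 m) =
      -((eperp m x * ee m x) * ((eperp m y * ee m y) * Pl m nrm sg (seg 0 m))) := by
    rw [VV]; noncomm_ring
  rw [h0, G_mul_Pl_seg m nrm sg y hy1 hym, mul_smul_comm,
    G_mul_Pl_seg m nrm sg x hx1 hxm, smul_smul, ← neg_smul]
  congr 1
  ring

end ListMachinery

section MainLemmas
variable (m : ℕ) (nrm sg : ℕ → Bool)

lemma main_oddeven (x y : ℕ) (hx1 : 1 ≤ x) (hxy : x < y) (hym : y ≤ m)
    (hodd : x % 2 = 1) (heven : y % 2 = 0) :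
    VV m x y * Pl m nrm sg (seg 0 m) * eperp m x * eperp m y =
      ((-1 : ℂ) ^ (bval (sg x) + bval (sg y) + bval (nrm x) + bval (nrm y)) * Complex.I) •
        Pl m nrm (fun s => if x < s ∧ s < y then !sg s else sg s) (seg 0 m) := by
  have hxm : x ≤ m := by omega
  have hy1 : 1 ≤ y := by omega
  rw [VV_mul_Pl m nrm sg x y hx1 hxm hy1 hym, smul_mul_assoc,
    Pl_mul_eperp_odd m nrm sg x hx1 hxm hodd, smul_smul, smul_mul_assoc,
    Pl_mul_eperp_even m nrm _ y hy1 hym heven, smul_smul]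
  have ePl : Pl m nrm
      (fun s => if y ≤ s then !(if x < s then !sg s else sg s)
        else (if x < s then !sg s else sg s)) (seg 0 m) =
      Pl m nrm (fun s => if x < s ∧ s < y then !sg s else sg s) (seg 0 m) := by
    apply Pl_congr
    intro s hs
    by_cases h1 : y ≤ s
    · rw [if_pos h1, if_pos (by omega : x < s), Bool.not_not,
        if_neg (by omega : ¬(x < s ∧ s < y))]
    · rw [if_neg h1]
      by_cases h2 : x < s
      · rw [if_pos h2, if_pos (by omega : x < s ∧ s < y)]
      · rw [if_neg h2, if_neg (by omega : ¬(x < s ∧ s < y))]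
  rw [ePl]
  congr 1
  rw [if_pos hxy]
  cases hsx : sg x <;> cases hsy : sg y <;> cases hnx : nrm x <;> cases hny : nrm y <;>
    simp [bval] <;> ring

lemma main_evenodd (x y : ℕ) (hx1 : 1 ≤ x) (hxy : x < y) (hym : y ≤ m)
    (heven : x % 2 = 0) (hodd : y % 2 = 1) :
    VV m x y * Pl m nrm sg (seg 0 m) * eperp m x * eperp m y =
      ((-1 : ℂ) ^ (bval (sg x) + bval (sg y) + bval (nrm x) + bval (nrm y)) * Complex.I) •
        Pl m nrm (fun s => if x ≤ s ∧ s ≤ y then !sg s else sg s) (seg 0 m) := by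
  have hxm : x ≤ m := by omega
  have hy1 : 1 ≤ y := by omega
  rw [VV_mul_Pl m nrm sg x y hx1 hxm hy1 hym, smul_mul_assoc,
    Pl_mul_eperp_even m nrm sg x hx1 hxm heven, smul_smul, smul_mul_assoc,
    Pl_mul_eperp_odd m nrm _ y hy1 hym hodd, smul_smul]
  have ePl : Pl m nrm
      (fun s => if y < s then !(if x ≤ s then !sg s else sg s)
        else (if x ≤ s then !sg s else sg s)) (seg 0 m) =
      Pl m nrm (fun s => if x ≤ s ∧ s ≤ y then !sg s else sg s) (seg 0 m) := by
    apply Pl_congr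
    intro s hs
    by_cases h1 : y < s
    · rw [if_pos h1, if_pos (by omega : x ≤ s), Bool.not_not,
        if_neg (by omega : ¬(x ≤ s ∧ s ≤ y))]
    · rw [if_neg h1]
      by_cases h2 : x ≤ s
      · rw [if_pos h2, if_pos (by omega : x ≤ s ∧ s ≤ y)]
      · rw [if_neg h2, if_neg (by omega : ¬(x ≤ s ∧ s ≤ y))]
  rw [ePl]
  congr 1
  rw [if_pos (by omega : x ≤ y)]
  cases hsx : sg x <;> cases hsy : sg y <;> cases hnx : nrm x <;> cases hny : nrm y <;>
    simp [bval] <;> ring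

end MainLemmas


/-- with `m = 2n`, `n ≥ 2`, `1 ≤ a < b ≤ n`, the odd-even and even-odd
cases of the action `V_{·,·} F e_·^⊥ e_·^⊥`, producing `i · F^{2a,2b-1}`. -/
theorem V_prodF_eperp_oddeven_evenodd (n : ℕ) (hn : 2 ≤ n) (nrm sg : ℕ → Bool)
    (a b : ℕ) (ha : 1 ≤ a) (hab : a < b) (hb : b ≤ n) :
    VV (2 * n) (2 * a - 1) (2 * b) * prodF (2 * n) nrm sg *
          eperp (2 * n) (2 * a - 1) * eperp (2 * n) (2 * b) =
        ((-1 : ℂ) ^ (bval (sg (2 * a - 1)) + bval (sg (2 * b)) +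
            bval (nrm (2 * a - 1)) + bval (nrm (2 * b))) * Complex.I) •
          prodF (2 * n) nrm
            (fun s => if 2 * a ≤ s ∧ s ≤ 2 * b - 1 then !sg s else sg s) ∧
      VV (2 * n) (2 * a) (2 * b - 1) * prodF (2 * n) nrm sg *
          eperp (2 * n) (2 * a) * eperp (2 * n) (2 * b - 1) =
        ((-1 : ℂ) ^ (bval (sg (2 * a)) + bval (sg (2 * b - 1)) +
            bval (nrm (2 * a)) + bval (nrm (2 * b - 1))) * Complex.I) •
          prodF (2 * n) nrm
            (fun s => if 2 * a ≤ s ∧ s ≤ 2 * b - 1 then !sg s else sg s) := by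

  constructor
  · rw [prodF_eq, prodF_eq,
      main_oddeven (2 * n) nrm sg (2 * a - 1) (2 * b) (by omega) (by omega) (by omega)
        (by omega) (by omega)]
    congr 1
    apply Pl_congr
    intro s hs
    by_cases h : 2 * a ≤ s ∧ s ≤ 2 * b - 1
    · rw [if_pos (by omega : 2 * a - 1 < s ∧ s < 2 * b), if_pos h]
    · rw [if_neg (by omega : ¬(2 * a - 1 < s ∧ s < 2 * b)), if_neg h]
  · rw [prodF_eq, prodF_eq,
      main_evenodd (2 * n) nrm sg (2 * a) (2 * b - 1) (by omega) (by omega) (by omega)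
        (by omega) (by omega)]

end
end
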